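/- In the polynomial ring P_n = K[x_1,…,x_n], the Demazure operator identity ∂_{n-1}∂_{n-2}⋯∂_1(ε_{n-1-r}(x_2,…,x_n) · x_1^u) = (−1)^u · δ_{u,r} · 1 holds for all 0 ≤ u, r ≤ n−1, where ε_j denotes the elementary symmetric polynomial of degree j and ∂_i(P) = (P − s_i(P))/(x_{i+1} − x_i). -/

import Mathlib

open MvPolynomial

/-- `IsDemazure D` says that `D i` is the `i`-th Demazure operator (zero-based: it involves
the transposition of the variables `x_i, x_{i+1}`), characterized by
`D i P * (x_{i+1} - x_i) = P - s_i(P)`; this determines `D i P` uniquely since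
`x_{i+1} - x_i` is a nonzerodivisor. -/
def IsDemazure {K : Type} [Field K] {n : ℕ}
    (D : Fin (n - 1) → MvPolynomial (Fin n) K → MvPolynomial (Fin n) K) : Prop :=
  ∀ (i : Fin (n - 1)) (P : MvPolynomial (Fin n) K),
    D i P * (X (⟨i.val + 1, by have := i.isLt; omega⟩ : Fin n) -
        X (⟨i.val, by have := i.isLt; omega⟩ : Fin n)) =
      P - rename (Equiv.swap (⟨i.val, by have := i.isLt; omega⟩ : Fin n)
        (⟨i.val + 1, by have := i.isLt; omega⟩ : Fin n)) P

open Finset MvPolynomial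



section Generic
variable {R : Type*} [CommRing R]

/-- `hh f j M` is the complete homogeneous symmetric polynomial of degree `j`
in the "variables" `f 0, …, f (M-1)`. -/
def hh (f : ℕ → R) : ℕ → ℕ → R
  | j, 0 => if j = 0 then 1 else 0
  | j, (M+1) => ∑ a ∈ Finset.range (j+1), f M ^ a * hh f (j-a) M

/-- `ee f k M` is the elementary symmetric polynomial of degree `k`
in `f 0, …, f (M-1)`. -/
def ee (f : ℕ → R) : ℕ → ℕ → R
  | k, 0 => if k = 0 then 1 else 0
  | 0, (_+1) => 1
  | (k+1), (M+1) => ee f (k+1) M + f M * ee f k M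

@[simp] lemma ee_zero (f : ℕ → R) : ∀ M, ee f 0 M = 1
  | 0 => rfl
  | (M+1) => rfl

lemma ee_succ (f : ℕ → R) (k M : ℕ) :
    ee f (k+1) (M+1) = ee f (k+1) M + f M * ee f k M := rfl

lemma hh_succ (f : ℕ → R) (j M : ℕ) :
    hh f j (M+1) = ∑ a ∈ Finset.range (j+1), f M ^ a * hh f (j-a) M := rfl

@[simp] lemma hh_nil (f : ℕ → R) (j : ℕ) : hh f j 0 = if j = 0 then 1 else 0 := rfl

@[simp] lemma hh_zero (f : ℕ → R) : ∀ M, hh f 0 M = 1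
  | 0 => rfl
  | (M+1) => by
    rw [hh_succ]
    simp [hh_zero f M]

lemma hh_one_var (f : ℕ → R) (j : ℕ) : hh f j 1 = f 0 ^ j := by
  rw [hh_succ]
  rw [Finset.sum_eq_single j]
  · simp
  · intro a ha hne
    have : j - a ≠ 0 := by
      have := Finset.mem_range.mp ha; omega
    simp [this]
  · intro h; simp at h

lemma hh_congr {f g : ℕ → R} : ∀ {M : ℕ}, (∀ t < M, f t = g t) → ∀ j, hh f j M = hh g j M
  | 0, _, _ => rfl
  | (M+1), h, j => by
    rw [hh_succ, hh_succ]
    refine Finset.sum_congr rfl fun a _ => ?_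
    rw [h M (by omega), hh_congr (fun t ht => h t (by omega))]

lemma ee_congr {f g : ℕ → R} : ∀ {M : ℕ}, (∀ t < M, f t = g t) → ∀ k, ee f k M = ee g k M
  | 0, _, k => by cases k <;> rfl
  | (M+1), h, 0 => by simp
  | (M+1), h, (k+1) => by
    rw [ee_succ, ee_succ, h M (by omega),
      ee_congr (fun t ht => h t (by omega)) (k+1),
      ee_congr (fun t ht => h t (by omega)) k]

/-- recurrence "A": pull out the last variable linearly. -/
lemma hh_recA (f : ℕ → R) (j M : ℕ) :
    hh f (j+1) (M+1) = f M * hh f j (M+1) + hh f (j+1) M := by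
  rw [hh_succ, Finset.sum_range_succ' (fun a => f M ^ a * hh f ((j+1) - a) M) (j+1)]
  simp only [pow_succ, pow_zero, one_mul, Nat.sub_zero]
  rw [hh_succ, Finset.mul_sum]
  congr 1
  refine Finset.sum_congr rfl fun a _ => ?_
  have : j + 1 - (a + 1) = j - a := by omega
  rw [this]; ring

end Generic
section Generic2
variable {R : Type*} [CommRing R]

/-- Key divisibility lemma: difference of `hh` in the last variable. -/
lemma hh_sub (M : ℕ) (f g : ℕ → R) (hfg : ∀ t < M, f t = g t) :
    ∀ j, hh f (j+1) (M+1) - hh g (j+1) (M+1)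
      = (f M - g M) * hh (fun t => if t = M+1 then g M else f t) j (M+2) := by
  set F : ℕ → R := fun t => if t = M+1 then g M else f t with hF
  have hFf : ∀ t < M+1, F t = f t := by
    intro t ht; simp only [hF]; rw [if_neg (by omega)]
  have hrec : ∀ j, hh F (j+1) (M+2) = g M * hh F j (M+2) + hh f (j+1) (M+1) := by
    intro j
    rw [hh_recA]
    congr 1
    · congr 1; simp [hF]
    · exact hh_congr hFf _
  intro j
  induction j with
  | zero =>
      rw [hh_recA, hh_recA, hh_zero, hh_zero, hh_zero, mul_one, mul_one,
        hh_congr hfg 1]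
      ring
  | succ j ih =>
      rw [hh_recA f (j+1), hh_recA g (j+1), ← hh_congr hfg (j+1+1)]
      have expand : f M * hh f (j+1) (M+1) - g M * hh g (j+1) (M+1)
          = f M * (hh f (j+1) (M+1) - hh g (j+1) (M+1))
            + (f M - g M) * hh g (j+1) (M+1) := by ring
      have e1 : hh g (j+1) (M+1) = hh f (j+1) (M+1) - (f M - g M) * hh F j (M+2) := by
        rw [← ih]; ring
      calc f M * hh f (j+1) (M+1) + hh f (j+1+1) M
            - (g M * hh g (j+1) (M+1) + hh f (j+1+1) M)
          = f M * hh f (j+1) (M+1) - g M * hh g (j+1) (M+1) := by ring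
        _ = f M * ((f M - g M) * hh F j (M+2))
            + (f M - g M) * (hh f (j+1) (M+1) - (f M - g M) * hh F j (M+2)) := by
            rw [expand, ih, ← e1]
        _ = (f M - g M) * (g M * hh F j (M+2) + hh f (j+1) (M+1))
            + (f M - g M) * ((f M - g M) * hh F j (M+2))
            - (f M - g M) * ((f M - g M) * hh F j (M+2)) := by ring
        _ = (f M - g M) * hh F (j+1) (M+2) := by rw [← hrec]; ring

/-- `ee` is invariant under swapping two adjacent variable positions. -/
lemma ee_swap {f g : ℕ → R} {L : ℕ} (h0 : ∀ t, t ≠ L → t ≠ L+1 → f t = g t)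
    (h1 : f L = g (L+1)) (h2 : f (L+1) = g L) :
    ∀ M, L+2 ≤ M → ∀ k, ee f k M = ee g k M := by
  have hlow : ∀ t < L, f t = g t := fun t ht => h0 t (by omega) (by omega)
  have base : ∀ k, ee f k (L+2) = ee g k (L+2) := by
    intro k
    match k with
    | 0 => simp
    | 1 =>
        rw [ee_succ f 0 (L+1), ee_succ f 0 L, ee_succ g 0 (L+1), ee_succ g 0 L,
          h1, h2, ee_congr hlow 1]
        simp only [ee_zero]
        ring
    | (k+2) =>
        rw [ee_succ f (k+1) (L+1), ee_succ g (k+1) (L+1), ee_succ f (k+1) L,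
          ee_succ g (k+1) L, ee_succ f k L, ee_succ g k L,
          h1, h2, ee_congr hlow (k+2), ee_congr hlow (k+1), ee_congr hlow k]
        ring
  intro M hM
  induction M with
  | zero => omega
  | succ M ih =>
      rcases Nat.lt_or_ge (M+1) (L+3) with hM' | hM'
      · have : M + 1 = L + 2 := by omega
        rw [this]; exact base
      · intro k
        match k with
        | 0 => simp
        | (k+1) =>
            rw [ee_succ, ee_succ, h0 M (by omega) (by omega),
              ih (by omega) (k+1), ih (by omega) k]

/-- first-variable recurrence for `ee`. -/
lemma ee_shift (f : ℕ → R) :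
    ∀ M k, ee f (k+1) (M+1) = ee (fun t => f (t+1)) (k+1) M + f 0 * ee (fun t => f (t+1)) k M := by
  intro M
  induction M with
  | zero =>
      intro k
      match k with
      | 0 => simp [ee_succ, ee, show (0:ℕ)+1 ≠ 0 by omega]
      | (k+1) => simp [ee_succ, ee]
  | succ M ih =>
      intro k
      match k with
      | 0 =>
          rw [ee_succ, ih 0, ee_succ]
          simp; ring
      | (k+1) =>
          rw [ee_succ, ih (k+1), ih k, ee_succ, ee_succ]
          ring

/-- `ee` as a sum over `powersetCard` of `range`. -/
lemma ee_eq_sum (f : ℕ → R) :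
    ∀ M k, ee f k M = ∑ s ∈ Finset.powersetCard k (Finset.range M), ∏ t ∈ s, f t := by
  intro M
  induction M with
  | zero =>
      intro k
      match k with
      | 0 => simp
      | (k+1) =>
          simp [ee, show Finset.powersetCard (k+1) (∅ : Finset ℕ) = ∅ from rfl]
  | succ M ih =>
      intro k
      match k with
      | 0 => simp
      | (k+1) =>
          rw [ee_succ, Finset.range_add_one,
            Finset.powersetCard_succ_insert (Finset.notMem_range_self) k,
            Finset.sum_union, Finset.sum_image]
          · rw [ih (k+1), ih k, Finset.mul_sum]
            congr 1
            refine Finset.sum_congr rfl fun s hs => ?_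
            have hM : M ∉ s := fun hMs => Finset.notMem_range_self
              ((Finset.mem_powersetCard.mp hs).1 hMs)
            rw [Finset.prod_insert hM]
          · intro a ha b hb hab
            have hMa : M ∉ a := fun h => Finset.notMem_range_self
              ((Finset.mem_powersetCard.mp ha).1 h)
            have hMb : M ∉ b := fun h => Finset.notMem_range_self
              ((Finset.mem_powersetCard.mp hb).1 h)
            rw [← Finset.erase_insert hMa, ← Finset.erase_insert hMb, hab]
          · rw [Finset.disjoint_left]
            intro s hs hs'
            obtain ⟨s', -, rfl⟩ := Finset.mem_image.mp hs'
            exact Finset.notMem_range_self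
              ((Finset.mem_powersetCard.mp hs).1 (Finset.mem_insert_self M s'))

end Generic2

section Generic3
variable {R : Type*} [CommRing R]

/-- The classical alternating identity `∑ (-1)^k e_k h_{m-k} = δ_{m,0}`. -/
lemma eh_alt (f : ℕ → R) :
    ∀ M m, (∑ k ∈ Finset.range (m+1), (-1:R)^k * ee f k M * hh f (m-k) M)
      = if m = 0 then 1 else 0 := by
  intro M
  induction M with
  | zero =>
      intro m
      rw [Finset.sum_eq_single 0]
      · cases m <;> simp
      · intro k hk hne
        match k, hne with
        | (k+1), _ =>
            have : ee f (k+1) 0 = 0 := rfl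
            rw [this]; ring
      · intro h; exact absurd (Finset.mem_range.mpr (by omega)) h
  | succ M IH =>
      intro m
      induction m with
      | zero => simp
      | succ m ihm =>
          rw [Finset.sum_range_succ]
          have step1 : ∀ k ∈ Finset.range (m+1),
              (-1:R)^k * ee f k (M+1) * hh f (m+1-k) (M+1)
              = f M * ((-1)^k * ee f k (M+1) * hh f (m-k) (M+1))
                + (-1)^k * ee f k (M+1) * hh f (m+1-k) M := by
            intro k hk
            have hk' : k ≤ m := by
              have := Finset.mem_range.mp hk; omega
            have h1 : m + 1 - k = (m - k) + 1 := by omega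
            rw [h1, hh_recA]
            ring
          rw [Finset.sum_congr rfl step1, Finset.sum_add_distrib, ← Finset.mul_sum, ihm]
          have key : (∑ k ∈ Finset.range (m+2), (-1:R)^k * ee f k (M+1) * hh f (m+1-k) M)
              = (∑ k ∈ Finset.range (m+2), (-1:R)^k * ee f k M * hh f (m+1-k) M)
                - f M * (∑ k ∈ Finset.range (m+1), (-1:R)^k * ee f k M * hh f (m-k) M) := by
            rw [Finset.sum_range_succ' (fun k => (-1:R)^k * ee f k (M+1) * hh f (m+1-k) M) (m+1),
                Finset.sum_range_succ' (fun k => (-1:R)^k * ee f k M * hh f (m+1-k) M) (m+1)]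
            have step2 : ∀ k ∈ Finset.range (m+1),
                (-1:R)^(k+1) * ee f (k+1) (M+1) * hh f (m+1-(k+1)) M
                = (-1)^(k+1) * ee f (k+1) M * hh f (m+1-(k+1)) M
                  - f M * ((-1)^k * ee f k M * hh f (m-k) M) := by
              intro k hk
              have h2 : m + 1 - (k+1) = m - k := by omega
              rw [h2, ee_succ]
              ring
            rw [Finset.sum_congr rfl step2, Finset.sum_sub_distrib, ← Finset.mul_sum]
            simp only [pow_zero, ee_zero, one_mul, Nat.sub_zero]
            ring
          have hlast : (-1:R)^(m+1) * ee f (m+1) (M+1) * hh f (m+1-(m+1)) (M+1)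
              = (-1)^(m+1) * ee f (m+1) (M+1) * hh f (m+1-(m+1)) M := by
            simp
          rw [hlast, add_assoc, ← Finset.sum_range_succ
              (fun k => (-1:R)^k * ee f k (M+1) * hh f (m+1-k) M) (m+1),
            key, IH (m+1), IH m]
          simp

end Generic3

section Generic4
variable {R S : Type*} [CommRing R] [CommRing S]

lemma map_hh (ψ : R →+* S) (f : ℕ → R) :
    ∀ M j, ψ (hh f j M) = hh (fun t => ψ (f t)) j M
  | 0, j => by
      rw [hh_nil, hh_nil]
      split_ifs <;> simp
  | (M+1), j => by
      rw [hh_succ, hh_succ, map_sum]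
      refine Finset.sum_congr rfl fun a _ => ?_
      rw [map_mul, map_pow, map_hh ψ f M]

lemma map_ee (ψ : R →+* S) (f : ℕ → R) :
    ∀ M k, ψ (ee f k M) = ee (fun t => ψ (f t)) k M
  | 0, k => by
      cases k <;> simp [ee]
  | (M+1), 0 => by simp
  | (M+1), (k+1) => by
      rw [ee_succ, ee_succ, map_add, map_mul, map_ee ψ f M (k+1), map_ee ψ f M k]

end Generic4

section Dem

open MvPolynomial


variable {K : Type} [Field K] {n : ℕ}

/-- The sequence of variables `x_0, x_1, …` (junk value `0` beyond `n`). -/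
noncomputable def vv (K : Type) [Field K] (n : ℕ) : ℕ → MvPolynomial (Fin n) K :=
  fun t => if h : t < n then X ⟨t, h⟩ else 0

lemma vv_lt {t : ℕ} (h : t < n) : vv K n t = X ⟨t, h⟩ := dif_pos h

variable (D : Fin (n - 1) → MvPolynomial (Fin n) K → MvPolynomial (Fin n) K)

/-- index `i` as element of `Fin n`. -/
def aF (i : Fin (n-1)) : Fin n := ⟨i.val, by have := i.isLt; omega⟩
/-- index `i+1` as element of `Fin n`. -/
def bF (i : Fin (n-1)) : Fin n := ⟨i.val + 1, by have := i.isLt; omega⟩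

lemma hXsub (i : Fin (n-1)) :
    (X (bF i) - X (aF i) : MvPolynomial (Fin n) K) ≠ 0 := by
  refine sub_ne_zero.mpr fun h => ?_
  have := MvPolynomial.X_injective h
  simp only [bF, aF, Fin.mk.injEq] at this
  omega

variable (hD : IsDemazure D)
include hD

lemma hD' : ∀ (i : Fin (n-1)) (P : MvPolynomial (Fin n) K),
    D i P * (X (bF i) - X (aF i)) = P - rename (Equiv.swap (aF i) (bF i)) P := hD

lemma D_unique (i : Fin (n-1)) {P Q : MvPolynomial (Fin n) K}
    (h : Q * (X (bF i) - X (aF i)) = P - rename (Equiv.swap (aF i) (bF i)) P) :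
    D i P = Q :=
  mul_right_cancel₀ (hXsub i) ((hD i P).trans h.symm)

lemma D_zero (i : Fin (n-1)) : D i 0 = 0 := by
  refine D_unique D hD i ?_
  simp

lemma D_add (i : Fin (n-1)) (P Q : MvPolynomial (Fin n) K) :
    D i (P + Q) = D i P + D i Q := by
  refine D_unique D hD i ?_
  rw [add_mul, hD' D hD i P, hD' D hD i Q, map_add]
  ring

lemma D_mulsym (i : Fin (n-1)) (E P : MvPolynomial (Fin n) K)
    (hE : rename (Equiv.swap (aF i) (bF i)) E = E) :
    D i (E * P) = E * D i P := by
  refine D_unique D hD i ?_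
  rw [mul_assoc, hD' D hD i P, map_mul, hE]
  ring

lemma D_const (i : Fin (n-1)) (E : MvPolynomial (Fin n) K)
    (hE : rename (Equiv.swap (aF i) (bF i)) E = E) :
    D i E = 0 := by
  have := D_mulsym D hD i E 1 hE
  rw [mul_one] at this
  rw [this]
  have h1 : D i (1 : MvPolynomial (Fin n) K) = 0 := by
    refine D_unique D hD i ?_
    simp
  rw [h1, mul_zero]

lemma D_hh (i : Fin (n-1)) (M' : ℕ) :
    D i (hh (vv K n) (M'+1) (i.val+1)) = - hh (vv K n) M' (i.val+2) := by
  have hin : i.val < n - 1 := i.isLt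
  have hin' : i.val + 1 < n := by omega
  have hii : i.val < n := by omega
  refine D_unique D hD i ?_
  set sw := Equiv.swap (aF i : Fin n) (bF i) with hsw
  have hren : rename sw (hh (vv K n) (M'+1) (i.val+1))
      = hh (fun t => rename sw (vv K n t)) (M'+1) (i.val+1) := by
    exact map_hh (rename sw : MvPolynomial (Fin n) K →ₐ[K] MvPolynomial (Fin n) K).toRingHom
      (vv K n) (i.val+1) (M'+1)
  set g : ℕ → MvPolynomial (Fin n) K := fun t => rename sw (vv K n t) with hg
  have hlow : ∀ t < i.val, vv K n t = g t := by
    intro t ht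
    have htn : t < n := by omega
    rw [hg]
    simp only
    rw [vv_lt htn, rename_X]
    congr 1
    rw [Equiv.swap_apply_of_ne_of_ne]
    · simp [aF, Fin.ext_iff]; omega
    · simp [bF, Fin.ext_iff]; omega
  have hdiff := hh_sub i.val (vv K n) g hlow M'
  have hgi : g i.val = X (bF i) := by
    rw [hg]; simp only
    rw [vv_lt hii, rename_X]
    congr 1
    have : (⟨i.val, hii⟩ : Fin n) = aF i := rfl
    rw [this, Equiv.swap_apply_left]
  have hFv : hh (fun t => if t = i.val+1 then g i.val else vv K n t) M' (i.val+2)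
      = hh (vv K n) M' (i.val+2) := by
    refine hh_congr ?_ M'
    intro t ht
    by_cases h : t = i.val + 1
    · rw [if_pos h, hgi, h, vv_lt hin']
      rfl
    · rw [if_neg h]
  rw [hren]
  rw [hdiff, hFv, hgi]
  have hvi : vv K n i.val = X (aF i) := by rw [vv_lt hii]; rfl
  rw [hvi]
  ring

end Dem

section Dem2

open MvPolynomial

variable {K : Type} [Field K] {n : ℕ}
variable (D : Fin (n - 1) → MvPolynomial (Fin n) K → MvPolynomial (Fin n) K)
variable (hD : IsDemazure D)
include hD

lemma ee_sym (i : Fin (n-1)) (k : ℕ) :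
    rename (Equiv.swap (aF i) (bF i)) (ee (vv K n) k n) = ee (vv K n) k n := by
  have hin : i.val < n - 1 := i.isLt
  have hii : i.val < n := by omega
  have hin' : i.val + 1 < n := by omega
  set sw := Equiv.swap (aF i : Fin n) (bF i) with hsw
  have hren : rename sw (ee (vv K n) k n)
      = ee (fun t => rename sw (vv K n t)) k n :=
    map_ee (rename sw : MvPolynomial (Fin n) K →ₐ[K] MvPolynomial (Fin n) K).toRingHom
      (vv K n) n k
  rw [hren]
  refine ee_swap (f := fun t => rename sw (vv K n t)) (g := vv K n) (L := i.val)
    ?_ ?_ ?_ n (by omega) k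
  · intro t ht ht'
    show rename sw (vv K n t) = vv K n t
    by_cases htn : t < n
    · rw [vv_lt htn, rename_X, Equiv.swap_apply_of_ne_of_ne]
      · simp [aF, Fin.ext_iff]; omega
      · simp [bF, Fin.ext_iff]; omega
    · have : vv K n t = 0 := dif_neg htn
      rw [this, map_zero]
  · show rename sw (vv K n i.val) = vv K n (i.val+1)
    rw [vv_lt hii, rename_X, show (⟨i.val, hii⟩ : Fin n) = aF i from rfl,
      Equiv.swap_apply_left, vv_lt hin']
    rfl
  · show rename sw (vv K n (i.val+1)) = vv K n i.val
    rw [vv_lt hin', rename_X, show (⟨i.val + 1, hin'⟩ : Fin n) = bF i from rfl,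
      Equiv.swap_apply_right, vv_lt hii]
    rfl

lemma fold_sum {ι : Type} (l : List (Fin (n-1))) (s : Finset ι)
    (F : ι → MvPolynomial (Fin n) K) :
    l.foldl (fun P i => D i P) (∑ t ∈ s, F t)
      = ∑ t ∈ s, l.foldl (fun P i => D i P) (F t) := by
  induction l generalizing F with
  | nil => simp
  | cons i l ih =>
      simp only [List.foldl_cons]
      have hsum : D i (∑ t ∈ s, F t) = ∑ t ∈ s, D i (F t) :=
        map_sum (AddMonoidHom.mk' (D i) (D_add D hD i)) F s
      rw [hsum]
      exact ih (fun t => D i (F t))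

lemma fold_mulsym (l : List (Fin (n-1))) (E P : MvPolynomial (Fin n) K)
    (hE : ∀ i : Fin (n-1), rename (Equiv.swap (aF i) (bF i)) E = E) :
    l.foldl (fun P i => D i P) (E * P) = E * l.foldl (fun P i => D i P) P := by
  induction l generalizing P with
  | nil => rfl
  | cons i l ih =>
      simp only [List.foldl_cons]
      rw [D_mulsym D hD i E P (hE i)]
      exact ih (D i P)

lemma fold_pow (hn : 1 ≤ n) (m : ℕ) :
    (List.finRange (n-1)).foldl (fun P i => D i P) (vv K n 0 ^ m)
      = if n-1 ≤ m then (-1 : MvPolynomial (Fin n) K)^(n-1) * hh (vv K n) (m-(n-1)) n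
        else 0 := by
  have key : ∀ k, k ≤ n-1 →
      ((List.finRange (n-1)).take k).foldl (fun P i => D i P) (vv K n 0 ^ m)
      = if k ≤ m then (-1 : MvPolynomial (Fin n) K)^k * hh (vv K n) (m-k) (k+1)
        else 0 := by
    intro k
    induction k with
    | zero =>
        intro _
        simp only [List.take_zero, List.foldl_nil, Nat.zero_le, if_pos, pow_zero, one_mul,
          Nat.sub_zero]
        rw [hh_one_var]
    | succ k ih =>
        intro hk
        have hk' : k < (List.finRange (n-1)).length := by
          rw [List.length_finRange]; omega
        have htake : (List.finRange (n-1)).take (k+1)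
            = ((List.finRange (n-1)).take k) ++ [(List.finRange (n-1))[k]] := by
          rw [← List.take_concat_get hk', List.concat_eq_append]
        have hget : (List.finRange (n-1))[k] = (⟨k, by omega⟩ : Fin (n-1)) := by
          simp [List.getElem_finRange, Fin.cast]
        rw [htake, List.foldl_append, ih (by omega), hget]
        simp only [List.foldl_cons, List.foldl_nil]
        set i : Fin (n-1) := ⟨k, by omega⟩ with hi
        have hia : i.val = k := rfl
        rcases Nat.lt_or_ge m k with h1 | h1
        · rw [if_neg (by omega), if_neg (by omega), D_zero D hD]
        rcases Nat.eq_or_lt_of_le h1 with h2 | h2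
        · -- k = m : constant
          rw [if_pos (by omega), if_neg (by omega), ← h2, Nat.sub_self, hh_zero, mul_one,
            D_const D hD]
          simp
        · -- k < m
          rw [if_pos (by omega), if_pos (by omega),
            D_mulsym D hD i ((-1 : MvPolynomial (Fin n) K)^k) _ (by simp)]
          have hmk : m - k = (m - (k+1)) + 1 := by omega
          rw [hmk]
          have := D_hh D hD i (m - (k+1))
          rw [hia] at this
          rw [this]
          have : k + 1 + 1 = k + 2 := rfl
          rw [this]
          ring
  have := key (n-1) le_rfl
  rw [List.take_of_length_le (by rw [List.length_finRange])] at this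
  have hn1 : n - 1 + 1 = n := by omega
  rw [hn1] at this
  exact this

end Dem2

lemma neg_one_pow_sub {R : Type*} [CommRing R] {a b : ℕ} (h : b ≤ a) :
    (-1:R)^(a-b) = (-1)^a * (-1)^b := by
  obtain ⟨k, rfl⟩ := Nat.exists_eq_add_of_le h
  rw [show b + k - b = k by omega, pow_add, mul_comm ((-1:R)^b), mul_assoc, ← mul_pow]
  norm_num

section Dem3

open MvPolynomial

variable {K : Type} [Field K] {n : ℕ}

lemma eps_eq (h0 : 0 < n) (c : ℕ) :
    (∑ s ∈ Finset.powersetCard c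
        ((Finset.univ : Finset (Fin n)).filter (fun i => i ≠ ⟨0, h0⟩)),
        ∏ i ∈ s, (X i : MvPolynomial (Fin n) K))
    = ee (fun t => vv K n (t+1)) c (n-1) := by
  classical
  rw [ee_eq_sum]
  have hw : ∀ t, t < n - 1 → (fun t => vv K n (t+1)) t = X (⟨(t+1) % n, Nat.mod_lt _ h0⟩ : Fin n) := by
    intro t ht
    have h1 : t + 1 < n := by omega
    have h2 : (t+1) % n = t + 1 := Nat.mod_eq_of_lt h1
    show vv K n (t+1) = _
    rw [vv_lt h1]
    congr 1
    exact Fin.ext h2.symm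
  refine Finset.sum_nbij' (fun s => s.image (fun a : Fin n => a.val - 1))
    (fun s => s.image (fun t : ℕ => (⟨(t+1) % n, Nat.mod_lt _ h0⟩ : Fin n)))
    ?_ ?_ ?_ ?_ ?_
  · intro s hs
    obtain ⟨hsub, hcard⟩ := Finset.mem_powersetCard.mp hs
    have hne : ∀ b ∈ s, (b : Fin n).val ≠ 0 := by
      intro b hb hbv
      have hmem := hsub hb
      simp only [Finset.mem_filter] at hmem
      exact hmem.2 (Fin.ext hbv)
    rw [Finset.mem_powersetCard]
    constructor
    · intro a ha
      obtain ⟨b, hb, rfl⟩ := Finset.mem_image.mp ha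
      have hbn := b.isLt
      have := hne b hb
      exact Finset.mem_range.mpr (by omega)
    · rw [Finset.card_image_of_injOn, hcard]
      intro a ha b hb hab
      have h1 := hne a ha
      have h2 := hne b hb
      simp only at hab
      exact Fin.ext (by omega)
  · intro s hs
    obtain ⟨hsub, hcard⟩ := Finset.mem_powersetCard.mp hs
    have hlt : ∀ t ∈ s, t < n - 1 := fun t ht => Finset.mem_range.mp (hsub ht)
    rw [Finset.mem_powersetCard]
    constructor
    · intro a ha
      obtain ⟨t, ht, rfl⟩ := Finset.mem_image.mp ha
      have h1 : t + 1 < n := by have := hlt t ht; omega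
      have h2 : (t+1) % n = t + 1 := Nat.mod_eq_of_lt h1
      simp only [Finset.mem_filter, Finset.mem_univ, true_and]
      intro hcontra
      have := congrArg Fin.val hcontra
      simp only [h2] at this
      omega
    · rw [Finset.card_image_of_injOn, hcard]
      intro a ha b hb hab
      have h1 : (a+1) % n = a + 1 := Nat.mod_eq_of_lt (by have := hlt a ha; omega)
      have h2 : (b+1) % n = b + 1 := Nat.mod_eq_of_lt (by have := hlt b hb; omega)
      have := congrArg Fin.val hab
      simp only [h1, h2] at this
      omega
  · intro s hs
    obtain ⟨hsub, hcard⟩ := Finset.mem_powersetCard.mp hs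
    have hne : ∀ b ∈ s, (b : Fin n).val ≠ 0 := by
      intro b hb hbv
      have hmem := hsub hb
      simp only [Finset.mem_filter] at hmem
      exact hmem.2 (Fin.ext hbv)
    simp only [Finset.image_image]
    refine Eq.trans (Finset.image_congr ?_) (Finset.image_id)
    intro b hb
    have h1 := hne b hb
    have h2 : b.val - 1 + 1 = b.val := by omega
    simp only [Function.comp_apply, id_eq]
    refine Fin.ext ?_
    show (b.val - 1 + 1) % n = b.val
    rw [h2, Nat.mod_eq_of_lt b.isLt]
  · intro s hs
    obtain ⟨hsub, hcard⟩ := Finset.mem_powersetCard.mp hs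
    have hlt : ∀ t ∈ s, t < n - 1 := fun t ht => Finset.mem_range.mp (hsub ht)
    simp only [Finset.image_image]
    refine Eq.trans (Finset.image_congr ?_) (Finset.image_id)
    intro t ht
    have h2 : (t+1) % n = t + 1 := Nat.mod_eq_of_lt (by have := hlt t ht; omega)
    simp only [Function.comp_apply, id_eq]
    show (⟨(t+1) % n, Nat.mod_lt _ h0⟩ : Fin n).val - 1 = t
    simp only [h2]
    omega
  · intro s hs
    obtain ⟨hsub, hcard⟩ := Finset.mem_powersetCard.mp hs
    have hne : ∀ b ∈ s, (b : Fin n).val ≠ 0 := by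
      intro b hb hbv
      have hmem := hsub hb
      simp only [Finset.mem_filter] at hmem
      exact hmem.2 (Fin.ext hbv)
    rw [Finset.prod_image]
    · refine Finset.prod_congr rfl fun b hb => ?_
      have h1 := hne b hb
      have h2 : b.val - 1 + 1 = b.val := by omega
      show (X b : MvPolynomial (Fin n) K) = vv K n (b.val - 1 + 1)
      rw [h2, vv_lt b.isLt]
    · intro a ha b hb hab
      have h1 := hne a ha
      have h2 := hne b hb
      simp only at hab
      exact Fin.ext (by omega)

lemma eps_expand (hn : 1 ≤ n) (c u : ℕ) :
    ee (fun t => vv K n (t+1)) c (n-1) * vv K n 0 ^ u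
      = ∑ t ∈ Finset.range (c+1),
          (-1 : MvPolynomial (Fin n) K)^t * ee (vv K n) (c-t) n * vv K n 0 ^ (u+t) := by
  induction c generalizing u with
  | zero => simp
  | succ c ih =>
      have hsh : ee (vv K n) (c+1) n = ee (fun t => vv K n (t+1)) (c+1) (n-1)
          + vv K n 0 * ee (fun t => vv K n (t+1)) c (n-1) := by
        have := ee_shift (vv K n) (n-1) c
        rwa [show n - 1 + 1 = n by omega] at this
      have h2 : ee (fun t => vv K n (t+1)) (c+1) (n-1) * vv K n 0 ^ u
          = ee (vv K n) (c+1) n * vv K n 0 ^ u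
            - ee (fun t => vv K n (t+1)) c (n-1) * vv K n 0 ^ (u+1) := by
        rw [hsh, pow_succ]
        ring
      rw [h2, ih (u+1),
        Finset.sum_range_succ' (fun t =>
          (-1 : MvPolynomial (Fin n) K)^t * ee (vv K n) (c+1-t) n * vv K n 0 ^ (u+t)) (c+1)]
      have h3 : ∀ t ∈ Finset.range (c+1),
          (-1 : MvPolynomial (Fin n) K)^(t+1) * ee (vv K n) (c+1-(t+1)) n * vv K n 0 ^ (u+(t+1))
          = -((-1)^t * ee (vv K n) (c-t) n * vv K n 0 ^ ((u+1)+t)) := by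
        intro t ht
        have e1 : c+1-(t+1) = c - t := by omega
        have e2 : u+(t+1) = (u+1)+t := by omega
        rw [e1, e2, pow_succ]
        ring
      rw [Finset.sum_congr rfl h3, Finset.sum_neg_distrib]
      simp only [pow_zero, one_mul, Nat.sub_zero, Nat.add_zero]
      ring

end Dem3

theorem demazure_esymm_identity' {K : Type} [Field K] (n : ℕ) (hn : 1 ≤ n)
    (D : Fin (n - 1) → MvPolynomial (Fin n) K → MvPolynomial (Fin n) K)
    (hD : IsDemazure D) (u r : ℕ) (hu : u ≤ n - 1) (hr : r ≤ n - 1) :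
    (List.finRange (n - 1)).foldl (fun P i => D i P)
      ((∑ s ∈ Finset.powersetCard (n - 1 - r)
          ((Finset.univ : Finset (Fin n)).filter (fun i => i ≠ ⟨0, hn⟩)),
          ∏ i ∈ s, X i) * X (⟨0, hn⟩ : Fin n) ^ u) =
    if u = r then ((-1 : MvPolynomial (Fin n) K)) ^ u else 0 := by
  classical
  have h0 : 0 < n := hn
  set c := n - 1 - r with hc
  have hX0 : (X (⟨0, h0⟩ : Fin n) : MvPolynomial (Fin n) K) = vv K n 0 := (vv_lt h0).symm
  rw [eps_eq h0 c, hX0, eps_expand hn c u, fold_sum D hD]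
  have step : ∀ t ∈ Finset.range (c+1),
      (List.finRange (n-1)).foldl (fun P i => D i P)
        ((-1 : MvPolynomial (Fin n) K)^t * ee (vv K n) (c-t) n * vv K n 0 ^ (u+t))
      = ((-1 : MvPolynomial (Fin n) K)^t * ee (vv K n) (c-t) n)
          * (if n-1 ≤ u+t then (-1 : MvPolynomial (Fin n) K)^(n-1) * hh (vv K n) (u+t-(n-1)) n
             else 0) := by
    intro t ht
    rw [fold_mulsym D hD (List.finRange (n-1))
        ((-1 : MvPolynomial (Fin n) K)^t * ee (vv K n) (c-t) n) (vv K n 0 ^ (u+t)) ?_,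
      fold_pow D hD hn (u+t)]
    intro i
    rw [map_mul, map_pow, map_neg, map_one, ee_sym D hD]
  rw [Finset.sum_congr rfl step]
  rcases Nat.lt_or_ge u r with hur | hur
  · -- u < r : every term vanishes
    rw [Finset.sum_eq_zero, if_neg (by omega)]
    intro t ht
    have ht' : t ≤ c := by have := Finset.mem_range.mp ht; omega
    rw [if_neg (by omega), mul_zero]
  · -- u ≥ r
    set d := u - r with hd
    have hdc : d ≤ c := by omega
    have hcd : c - d + (d+1) = c + 1 := by omega
    rw [Finset.range_eq_Ico, ← Finset.sum_Ico_consecutive _ (Nat.zero_le (c-d)) (by omega : c - d ≤ c+1)]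
    have hzero : (∑ t ∈ Finset.Ico 0 (c-d),
        ((-1 : MvPolynomial (Fin n) K)^t * ee (vv K n) (c-t) n)
          * (if n-1 ≤ u+t then (-1 : MvPolynomial (Fin n) K)^(n-1) * hh (vv K n) (u+t-(n-1)) n
             else 0)) = 0 := by
      refine Finset.sum_eq_zero fun t ht => ?_
      have ht' := (Finset.mem_Ico.mp ht).2
      rw [if_neg (by omega), mul_zero]
    rw [hzero, zero_add, Finset.sum_Ico_eq_sum_range]
    have hlen : c + 1 - (c - d) = d + 1 := by omega
    rw [hlen]
    have step2 : ∀ k ∈ Finset.range (d+1),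
        ((-1 : MvPolynomial (Fin n) K)^(c-d+k) * ee (vv K n) (c-(c-d+k)) n)
          * (if n-1 ≤ u+(c-d+k) then
              (-1 : MvPolynomial (Fin n) K)^(n-1) * hh (vv K n) (u+(c-d+k)-(n-1)) n else 0)
        = ((-1 : MvPolynomial (Fin n) K)^(c-d) * (-1)^(n-1))
            * ((-1)^k * ee (vv K n) (d-k) n * hh (vv K n) k n) := by
      intro k hk
      have hk' : k ≤ d := by have := Finset.mem_range.mp hk; omega
      have e1 : c - (c-d+k) = d - k := by omega
      have e2 : u + (c-d+k) - (n-1) = k := by omega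
      have e3 : n - 1 ≤ u + (c-d+k) := by omega
      rw [e1, e2, if_pos e3, pow_add]
      ring
    rw [Finset.sum_congr rfl step2, ← Finset.mul_sum]
    have hrefl := Finset.sum_range_reflect
      (fun k => (-1 : MvPolynomial (Fin n) K)^k * ee (vv K n) (d-k) n * hh (vv K n) k n) (d+1)
    rw [← hrefl]
    have step3 : ∀ k ∈ Finset.range (d+1),
        (-1 : MvPolynomial (Fin n) K)^(d+1-1-k) * ee (vv K n) (d-(d+1-1-k)) n
          * hh (vv K n) (d+1-1-k) n
        = (-1 : MvPolynomial (Fin n) K)^d * ((-1)^k * ee (vv K n) k n * hh (vv K n) (d-k) n) := by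
      intro k hk
      have hk' : k ≤ d := by have := Finset.mem_range.mp hk; omega
      have e1 : d + 1 - 1 - k = d - k := by omega
      have e2 : d - (d-k) = k := by omega
      rw [e1, e2, neg_one_pow_sub hk']
      ring
    rw [Finset.sum_congr rfl step3, ← Finset.mul_sum, eh_alt]
    rcases Nat.eq_or_lt_of_le hur with h2 | h2
    · -- u = r, d = 0
      have hd0 : d = 0 := by omega
      rw [if_pos h2.symm, hd0, if_pos rfl]
      simp only [Nat.sub_zero, pow_zero, one_mul, mul_one]
      rw [hc, ← h2, neg_one_pow_sub hr]
      have hsq : (-1 : MvPolynomial (Fin n) K)^(n-1) * (-1)^(n-1) = 1 := by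
        rw [← mul_pow]; norm_num
      calc (-1 : MvPolynomial (Fin n) K)^(n-1) * (-1)^r * (-1)^(n-1)
          = ((-1)^(n-1) * (-1)^(n-1)) * (-1)^r := by ring
        _ = (-1)^r := by rw [hsq, one_mul]
    · have hd0 : d ≠ 0 := by omega
      rw [if_neg hd0, if_neg (by omega)]
      ring


/-- `∂_{n-1}⋯∂_1(ε_{n-1-r}(x_2,…,x_n)·x_1^u) = (-1)^u δ_{u,r}`
for `0 ≤ u, r ≤ n-1`. The fold applies `∂_1` first, then `∂_2`, …, finally `∂_{n-1}`;
`ε_j(x_2,…,x_n)` is the `j`-th elementary symmetric polynomial in the variables other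
than `x_1` (the variable of index `0`). -/
theorem demazure_esymm_identity {K : Type} [Field K] (n : ℕ) (hn : 1 ≤ n)
    (D : Fin (n - 1) → MvPolynomial (Fin n) K → MvPolynomial (Fin n) K)
    (hD : IsDemazure D) (u r : ℕ) (hu : u ≤ n - 1) (hr : r ≤ n - 1) :
    (List.finRange (n - 1)).foldl (fun P i => D i P)
      ((∑ s ∈ Finset.powersetCard (n - 1 - r)
          ((Finset.univ : Finset (Fin n)).filter (fun i => i ≠ ⟨0, by omega⟩)),
          ∏ i ∈ s, X i) * X (⟨0, by omega⟩ : Fin n) ^ u) =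
    if u = r then ((-1 : MvPolynomial (Fin n) K)) ^ u else 0 := by
  exact demazure_esymm_identity' n hn D hD u r hu hr
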